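/- Let n ≥ 1, k ≥ 2, and f : 𝔽_{2^n} → ℤ/2^kℤ. Define g(x) = f(x) + 2^{k−2}·ι(Tr(x)) + 2^{k−1}·ι(σ(1,x)), h(x) = g(x) + 2^{k−1}·ι(Tr(x)), and let f̃ : 𝔽_{2^n} → ℤ/2^{k−1}ℤ be the reduction of f modulo 2^{k−1}. Then f is nega-ℤ_{2^k}-bent if and only if the following three conditions hold simultaneously: (1) g is gbent; (2) h is gbent; (3) f̃ is ℤ_{2^{k−1}}-bent. -/

import Mathlib

noncomputable section

/-- The absolute trace Tr(x) = x + x² + x⁴ + … + x^{2^{n−1}}. -/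
def Tr {F : Type} [Field F] (n : ℕ) (x : F) : F :=
  ∑ i ∈ Finset.range n, x ^ (2 ^ i)

/-- σ(c,x) = Σ_{0 ≤ i < j ≤ n−1} (cx)^{2^i} (cx)^{2^j} -/
def sig {F : Type} [Field F] (n : ℕ) (c x : F) : F :=
  ∑ j ∈ Finset.range n, ∑ i ∈ Finset.range j, (c * x) ^ (2 ^ i) * (c * x) ^ (2 ^ j)

/-- ι(e): the integer lift of e ∈ {0,1} ⊆ F. -/
def iotaN {F : Type} [Field F] [DecidableEq F] (e : F) : ℕ :=
  if e = 1 then 1 else 0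

/-- ι(e) viewed in ℤ/2^kℤ. -/
def iotaZ {F : Type} [Field F] [DecidableEq F] (k : ℕ) (e : F) : ZMod (2 ^ k) :=
  if e = 1 then 1 else 0

/-- ζ_{2^k} = e^{2πi/2^k}. -/
def zeta (k : ℕ) : ℂ := Complex.exp (2 * Real.pi * Complex.I / 2 ^ k)

/-- c₀ ∈ {0,1} ⊆ F equals 1 if c is odd and 0 if c is even. -/
def czero {F : Type} [Field F] (k : ℕ) (c : ZMod (2 ^ k)) : F :=
  if c.val % 2 = 1 then 1 else 0

/-- The generalized Walsh–Hadamard transform at level 2^j: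
H_f(c,u) = Σ_{x ∈ F} ζ_{2^j}^{c·f(x)} (−1)^{ι(Tr(ux))}. -/
def gWH {F : Type} [Field F] [Fintype F] [DecidableEq F] (n j : ℕ)
    (f : F → ZMod (2 ^ j)) (c : ZMod (2 ^ j)) (u : F) : ℂ :=
  ∑ x : F, zeta j ^ (c * f x).val * (-1 : ℂ) ^ (iotaN (Tr n (u * x)))

/-- The nega-ℤ_{2^k}-Hadamard transform
K_f(c,u) = Σ_{x ∈ F} (−1)^{ι(Tr(ux)) + ι(σ(c₀,x))} ζ_{2^k}^{c·f(x)} i^{ι(Tr(c₀x))}. -/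
def negaK {F : Type} [Field F] [Fintype F] [DecidableEq F] (n k : ℕ)
    (f : F → ZMod (2 ^ k)) (c : ZMod (2 ^ k)) (u : F) : ℂ :=
  ∑ x : F, (-1 : ℂ) ^ (iotaN (Tr n (u * x)) + iotaN (sig n (czero k c) x)) *
    zeta k ^ (c * f x).val * Complex.I ^ (iotaN (Tr n (czero k c * x)))

/-! ### Auxiliary lemmas -/

instance instNeZeroPow (k : ℕ) : NeZero ((2:ℕ) ^ k) := ⟨(Nat.two_pow_pos k).ne'⟩

lemma natCast_val_self {N : ℕ} [NeZero N] (a : ZMod N) : ((a.val : ℕ) : ZMod N) = a := by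
  rw [ZMod.natCast_val, ZMod.cast_id]

lemma isPrimitiveRoot_zeta (k : ℕ) : IsPrimitiveRoot (zeta k) (2 ^ k) := by
  have := Complex.isPrimitiveRoot_exp (2 ^ k) (by positivity)
  unfold zeta
  convert this using 3
  push_cast
  ring

lemma zeta_pow_card (k : ℕ) : zeta k ^ (2 ^ k) = 1 := (isPrimitiveRoot_zeta k).pow_eq_one

lemma zeta_pow_congr (k : ℕ) {m m' : ℕ} (h : m % 2 ^ k = m' % 2 ^ k) :
    zeta k ^ m = zeta k ^ m' := by
  conv_lhs => rw [← Nat.div_add_mod m (2 ^ k)]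
  conv_rhs => rw [← Nat.div_add_mod m' (2 ^ k)]
  rw [pow_add, pow_add, pow_mul, pow_mul, zeta_pow_card, one_pow, one_pow, h]

lemma zeta_pow_mod (k m : ℕ) : zeta k ^ (m % 2 ^ k) = zeta k ^ m :=
  zeta_pow_congr k (Nat.mod_mod_of_dvd m dvd_rfl)

lemma zeta_pow_half {k : ℕ} (hk : 1 ≤ k) : zeta k ^ (2 ^ (k - 1)) = -1 := by
  rw [zeta, ← Complex.exp_nat_mul]
  rw [show ((2 ^ (k-1) : ℕ) : ℂ) * (2 * Real.pi * Complex.I / 2 ^ k) =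
      Real.pi * Complex.I from ?_]
  · exact Complex.exp_pi_mul_I
  · have h : (2:ℂ) ^ k = 2 ^ (k-1) * 2 := by rw [← pow_succ]; congr 1; omega
    have h2 : (2:ℂ) ^ (k-1) ≠ 0 := pow_ne_zero _ two_ne_zero
    push_cast
    rw [h]
    field_simp

lemma zeta_pow_quarter {k : ℕ} (hk : 2 ≤ k) : zeta k ^ (2 ^ (k - 2)) = Complex.I := by
  rw [zeta, ← Complex.exp_nat_mul]
  rw [show ((2 ^ (k-2) : ℕ) : ℂ) * (2 * Real.pi * Complex.I / 2 ^ k) =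
      ((Real.pi / 2 : ℝ) : ℂ) * Complex.I from ?_]
  · rw [Complex.exp_mul_I, ← Complex.ofReal_cos, ← Complex.ofReal_sin,
      Real.cos_pi_div_two, Real.sin_pi_div_two]
    simp
  · have h : (2:ℂ) ^ k = 2 ^ (k-2) * 4 := by
      rw [show k = (k-2) + 2 by omega, pow_add]; norm_num
    have h2 : (2:ℂ) ^ (k-2) ≠ 0 := pow_ne_zero _ two_ne_zero
    push_cast
    rw [h]
    field_simp
    ring

lemma zeta_sq {k : ℕ} (hk : 1 ≤ k) : zeta k ^ 2 = zeta (k - 1) := by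
  rw [zeta, zeta, sq, ← Complex.exp_add]
  congr 1
  have h : (2:ℂ) ^ k = 2 * 2 ^ (k-1) := by rw [← pow_succ']; congr 1; omega
  have h2 : (2:ℂ) ^ (k-1) ≠ 0 := pow_ne_zero _ two_ne_zero
  rw [h]
  field_simp
  ring

lemma zeta_pow_natCast (k m : ℕ) : zeta k ^ ((m : ZMod (2 ^ k))).val = zeta k ^ m := by
  rw [ZMod.val_natCast, zeta_pow_mod]

lemma zeta_pow_val_mul (k : ℕ) (a b : ZMod (2 ^ k)) :
    zeta k ^ (a * b).val = zeta k ^ (a.val * b.val) := by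
  rw [ZMod.val_mul, zeta_pow_mod]

lemma zeta_pow_val_add (k : ℕ) (a b : ZMod (2 ^ k)) :
    zeta k ^ (a + b).val = zeta k ^ a.val * zeta k ^ b.val := by
  rw [ZMod.val_add, zeta_pow_mod, pow_add]

lemma abs_eq_sqrt_iff (n : ℕ) (z : ℂ) :
    ‖z‖ = Real.sqrt (2 ^ n) ↔ z * (starRingEnd ℂ) z = 2 ^ n := by
  rw [Complex.norm_def, Real.sqrt_inj (Complex.normSq_nonneg z) (by positivity),
    Complex.mul_conj]
  exact ⟨fun h => by rw [h]; norm_cast, fun h => by exact_mod_cast h⟩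

lemma iotaZ_eq {F : Type} [Field F] [DecidableEq F] (k : ℕ) (e : F) :
    iotaZ k e = ((iotaN e : ℕ) : ZMod (2 ^ k)) := by
  unfold iotaZ iotaN; split <;> simp

lemma iotaN_zero {F : Type} [Field F] [DecidableEq F] : iotaN (0 : F) = 0 := by
  unfold iotaN; rw [if_neg]; exact zero_ne_one

lemma Tr_zero {F : Type} [Field F] (n : ℕ) : Tr n (0 : F) = 0 := by
  unfold Tr
  exact Finset.sum_eq_zero fun i _ => zero_pow (Nat.two_pow_pos i).ne'

lemma sig_zero {F : Type} [Field F] (n : ℕ) (x : F) : sig n (0 : F) x = 0 := by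
  unfold sig
  refine Finset.sum_eq_zero fun j _ => Finset.sum_eq_zero fun i _ => ?_
  rw [zero_mul, zero_pow (Nat.two_pow_pos i).ne', zero_mul]

lemma I_pow_mod (m : ℕ) : Complex.I ^ m = Complex.I ^ (m % 4) := by
  conv_lhs => rw [← Nat.div_add_mod m 4]
  rw [pow_add, pow_mul, Complex.I_pow_four, one_pow, one_mul]

lemma cast_cmul {k : ℕ} (c : ZMod (2 ^ k)) (e m : ℕ) :
    c * 2 ^ e * (m : ZMod (2 ^ k)) = ((c.val * 2 ^ e * m : ℕ) : ZMod (2 ^ k)) := by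
  push_cast [natCast_val_self]
  ring

lemma zeta_sign_half {k : ℕ} (hk : 1 ≤ k) (c : ZMod (2 ^ k)) (hc : c.val % 2 = 1) (m : ℕ) :
    zeta k ^ (c * 2 ^ (k - 1) * (m : ZMod (2 ^ k))).val = (-1 : ℂ) ^ m := by
  rw [cast_cmul, zeta_pow_natCast,
    show c.val * 2 ^ (k - 1) * m = 2 ^ (k - 1) * (c.val * m) by ring,
    pow_mul, zeta_pow_half hk, pow_mul, Odd.neg_one_pow (Nat.odd_iff.mpr hc)]

lemma zeta_sign_quarter {k : ℕ} (hk : 2 ≤ k) (c : ZMod (2 ^ k)) (m : ℕ) :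
    zeta k ^ (c * 2 ^ (k - 2) * (m : ZMod (2 ^ k))).val = Complex.I ^ (c.val * m) := by
  rw [cast_cmul, zeta_pow_natCast,
    show c.val * 2 ^ (k - 2) * m = 2 ^ (k - 2) * (c.val * m) by ring,
    pow_mul, zeta_pow_quarter hk]

lemma I_pow_c_one {k : ℕ} {c : ZMod (2 ^ k)} (hc : c.val % 4 = 1) (m : ℕ) :
    Complex.I ^ (c.val * m) = Complex.I ^ m := by
  rw [pow_mul, I_pow_mod c.val, hc, pow_one]

lemma I_pow_c_three {k : ℕ} {c : ZMod (2 ^ k)} (hc : c.val % 4 = 3) (m : ℕ) :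
    Complex.I ^ (c.val * m) = (-1 : ℂ) ^ m * Complex.I ^ m := by
  rw [pow_mul, I_pow_mod c.val, hc,
    show Complex.I ^ 3 = -Complex.I by rw [pow_succ, Complex.I_sq]; ring,
    neg_pow]

/-! ### The three transform identities -/

lemma negaK_eq_gWH_g {F : Type} [Field F] [Fintype F] [DecidableEq F] (n k : ℕ) (hk : 2 ≤ k)
    (f g : F → ZMod (2 ^ k))
    (hg : ∀ x, g x = f x + 2 ^ (k - 2) * iotaZ k (Tr n x) + 2 ^ (k - 1) * iotaZ k (sig n 1 x))
    (c : ZMod (2 ^ k)) (hc : c.val % 4 = 1) (u : F) :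
    negaK n k f c u = gWH n k g c u := by
  have hc2 : c.val % 2 = 1 := by omega
  unfold negaK gWH
  refine Finset.sum_congr rfl fun x _ => ?_
  have hcz : czero k c = (1 : F) := if_pos hc2
  rw [hcz, one_mul, hg x, iotaZ_eq, iotaZ_eq, mul_add, mul_add,
    zeta_pow_val_add, zeta_pow_val_add, ← mul_assoc c, ← mul_assoc c,
    zeta_sign_quarter hk, zeta_sign_half (by omega) c hc2, I_pow_c_one hc, pow_add]
  ring

lemma negaK_eq_gWH_h {F : Type} [Field F] [Fintype F] [DecidableEq F] (n k : ℕ) (hk : 2 ≤ k)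
    (f h : F → ZMod (2 ^ k))
    (hh' : ∀ x, h x = f x + 2 ^ (k - 2) * iotaZ k (Tr n x) + 2 ^ (k - 1) * iotaZ k (sig n 1 x)
      + 2 ^ (k - 1) * iotaZ k (Tr n x))
    (c : ZMod (2 ^ k)) (hc : c.val % 4 = 3) (u : F) :
    negaK n k f c u = gWH n k h c u := by
  have hc2 : c.val % 2 = 1 := by omega
  unfold negaK gWH
  refine Finset.sum_congr rfl fun x _ => ?_
  have hcz : czero k c = (1 : F) := if_pos hc2
  rw [hcz, one_mul, hh' x, iotaZ_eq, iotaZ_eq, mul_add, mul_add, mul_add,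
    zeta_pow_val_add, zeta_pow_val_add, zeta_pow_val_add, ← mul_assoc c, ← mul_assoc c,
    ← mul_assoc c, zeta_sign_quarter hk, zeta_sign_half (by omega) c hc2,
    zeta_sign_half (by omega) c hc2, I_pow_c_three hc, pow_add]
  have ht2 : (-1 : ℂ) ^ (iotaN (Tr n x) * 2) = 1 := by
    rw [pow_mul]; rcases neg_one_pow_eq_or ℂ (iotaN (Tr n x)) with h1 | h1 <;> rw [h1] <;> norm_num
  linear_combination (-(zeta k ^ (c * f x).val * Complex.I ^ (iotaN (Tr n x)) *
    (-1 : ℂ) ^ (iotaN (sig n 1 x)) * (-1 : ℂ) ^ (iotaN (Tr n (u * x))))) * ht2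

lemma negaK_even {F : Type} [Field F] [Fintype F] [DecidableEq F] (n k : ℕ) (hk : 1 ≤ k)
    (f : F → ZMod (2 ^ k)) (ftilde : F → ZMod (2 ^ (k - 1)))
    (hft : ∀ x, ftilde x = ((f x).val : ZMod (2 ^ (k - 1))))
    (c : ZMod (2 ^ k)) (c' : ZMod (2 ^ (k - 1))) (hcc : c.val = 2 * c'.val) (u : F) :
    negaK n k f c u = gWH n (k - 1) ftilde c' u := by
  unfold negaK gWH
  refine Finset.sum_congr rfl fun x _ => ?_
  have hcz : czero k c = (0 : F) := if_neg (by omega)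
  rw [hcz, zero_mul, Tr_zero, sig_zero, iotaN_zero, pow_zero, mul_one, add_zero, hft x, mul_comm]
  congr 1
  rw [zeta_pow_val_mul, hcc, zeta_pow_val_mul (k-1), ZMod.val_natCast,
    show 2 * c'.val * (f x).val = 2 * (c'.val * (f x).val) by ring,
    pow_mul, zeta_sq hk]
  refine zeta_pow_congr (k-1) ?_
  conv_rhs => rw [Nat.mul_mod, Nat.mod_mod_of_dvd _ dvd_rfl, ← Nat.mul_mod]

/-! ### The Galois lemma -/

abbrev NN (k : ℕ) : ℕ+ := ⟨2 ^ k, Nat.two_pow_pos k⟩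

instance instCycNN (k : ℕ) : IsCyclotomicExtension {((NN k):ℕ)} ℚ (CyclotomicField (NN k) ℚ) := by
  have : NeZero (((NN k : ℕ)) : ℚ) := ⟨by simp⟩
  exact CyclotomicField.isCyclotomicExtension (NN k : ℕ) ℚ

open Polynomial in
lemma exists_emb (k : ℕ) (d : ZMod (2 ^ k)) (hd : d.val % 2 = 1) :
    ∃ φ : CyclotomicField (NN k) ℚ →ₐ[ℚ] ℂ,
      ∀ m : ℕ, φ (IsCyclotomicExtension.zeta (NN k) ℚ (CyclotomicField (NN k) ℚ) ^ m)
        = zeta k ^ (d.val * m) := by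
  have hζK : IsPrimitiveRoot
      (IsCyclotomicExtension.zeta (NN k) ℚ (CyclotomicField (NN k) ℚ)) ((NN k : ℕ)) :=
    IsCyclotomicExtension.zeta_spec (NN k) ℚ (CyclotomicField (NN k) ℚ)
  have hmin : minpoly ℚ ((hζK.powerBasis ℚ).gen) = cyclotomic ((NN k : ℕ)) ℚ := by
    rw [IsPrimitiveRoot.powerBasis_gen]
    exact (cyclotomic_eq_minpoly_rat hζK (Nat.two_pow_pos k)).symm
  have hcop : (d.val).Coprime (2 ^ k) :=
    Nat.Coprime.pow_right _ (Nat.coprime_two_right.mpr (Nat.odd_iff.mpr hd))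
  have hprim : IsPrimitiveRoot (zeta k ^ d.val) (2 ^ k) :=
    (isPrimitiveRoot_zeta k).pow_of_coprime _ hcop
  have hy : (aeval ((zeta k) ^ d.val)) (minpoly ℚ ((hζK.powerBasis ℚ).gen)) = 0 := by
    rw [hmin, aeval_def, ← eval_map, map_cyclotomic]
    exact hprim.isRoot_cyclotomic (Nat.two_pow_pos k)
  refine ⟨(hζK.powerBasis ℚ).lift _ hy, fun m => ?_⟩
  have hl := PowerBasis.lift_gen (hζK.powerBasis ℚ) _ hy
  rw [IsPrimitiveRoot.powerBasis_gen] at hl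
  rw [map_pow, hl, ← pow_mul, mul_comm]

lemma gWH_abs_odd {F : Type} [Field F] [Fintype F] [DecidableEq F] (n k : ℕ)
    (g : F → ZMod (2 ^ k)) (u : F) (c₀ c : ZMod (2 ^ k))
    (h₀ : c₀.val % 2 = 1) (hc : c.val % 2 = 1)
    (hu : ‖gWH n k g c₀ u‖ = Real.sqrt (2 ^ n)) :
    ‖gWH n k g c u‖ = Real.sqrt (2 ^ n) := by
  set ζK : CyclotomicField (NN k) ℚ :=
    IsCyclotomicExtension.zeta (NN k) ℚ (CyclotomicField (NN k) ℚ) with hζKdef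
  have habs1 : ∀ m : ℕ, ‖zeta k ^ m‖ = 1 := by
    intro m
    exact Complex.norm_eq_one_of_pow_eq_one (by rw [← pow_mul, mul_comm, pow_mul, zeta_pow_card, one_pow])
      (Nat.two_pow_pos k).ne'
  have hconj : ∀ (d : ZMod (2 ^ k)) (v : ℕ), v ≤ 2 ^ k →
      (starRingEnd ℂ) (zeta k ^ (d.val * v)) = zeta k ^ (d.val * (2 ^ k - v)) := by
    intro d v hv
    rw [← Complex.inv_eq_conj (habs1 _)]
    apply inv_eq_of_mul_eq_one_right
    rw [← pow_add, ← Nat.mul_add, Nat.add_sub_cancel' hv, mul_comm, pow_mul, zeta_pow_card,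
      one_pow]
  obtain ⟨φ₀, hφ₀⟩ := exists_emb k c₀ h₀
  obtain ⟨φc, hφc⟩ := exists_emb k c hc
  set S : CyclotomicField (NN k) ℚ :=
    ∑ x : F, (-1 : CyclotomicField (NN k) ℚ) ^ (iotaN (Tr n (u * x))) * ζK ^ ((g x).val) with hS
  set T : CyclotomicField (NN k) ℚ :=
    ∑ x : F, (-1 : CyclotomicField (NN k) ℚ) ^ (iotaN (Tr n (u * x))) *
      ζK ^ (2 ^ k - (g x).val) with hT
  have hφS : ∀ (φ : CyclotomicField (NN k) ℚ →ₐ[ℚ] ℂ) (d : ZMod (2 ^ k)),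
      (∀ m, φ (ζK ^ m) = zeta k ^ (d.val * m)) → φ S = gWH n k g d u := by
    intro φ d hφ
    rw [hS, map_sum]
    unfold gWH
    refine Finset.sum_congr rfl fun x _ => ?_
    rw [map_mul, map_pow, map_neg, map_one, hφ, zeta_pow_val_mul]
    ring
  have hφT : ∀ (φ : CyclotomicField (NN k) ℚ →ₐ[ℚ] ℂ) (d : ZMod (2 ^ k)),
      (∀ m, φ (ζK ^ m) = zeta k ^ (d.val * m)) →
      φ T = (starRingEnd ℂ) (gWH n k g d u) := by
    intro φ d hφ
    rw [hT, map_sum]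
    unfold gWH
    rw [map_sum]
    refine Finset.sum_congr rfl fun x _ => ?_
    rw [map_mul, map_pow, map_neg, map_one, hφ, zeta_pow_val_mul,
      map_mul (starRingEnd ℂ), hconj d _ (ZMod.val_lt (g x)).le,
      map_pow (starRingEnd ℂ), map_neg (starRingEnd ℂ), map_one]
    ring
  have hST : S * T = (2 : CyclotomicField (NN k) ℚ) ^ n := by
    apply φ₀.toRingHom.injective
    simp only [AlgHom.toRingHom_eq_coe, RingHom.coe_coe]
    rw [map_mul, hφS φ₀ c₀ hφ₀, hφT φ₀ c₀ hφ₀, map_pow, map_ofNat]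
    exact (abs_eq_sqrt_iff n _).mp hu
  rw [abs_eq_sqrt_iff, ← hφT φc c hφc, ← hφS φc c hφc, ← map_mul, hST, map_pow, map_ofNat]

/-! ### Main theorem -/

/-- f is nega-ℤ_{2^k}-bent iff (1) g is gbent, (2) h is gbent, and
(3) the reduction f̃ of f modulo 2^{k−1} is ℤ_{2^{k−1}}-bent, where
g(x) = f(x) + 2^{k−2}·ι(Tr(x)) + 2^{k−1}·ι(σ(1,x)) and
h(x) = g(x) + 2^{k−1}·ι(Tr(x)). -/
theorem stmt9 {F : Type} [Field F] [Fintype F] [DecidableEq F] (n k : ℕ)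
    (hn : 1 ≤ n) (hk : 2 ≤ k) (hF : Fintype.card F = 2 ^ n)
    (f : F → ZMod (2 ^ k))
    (g h : F → ZMod (2 ^ k)) (ftilde : F → ZMod (2 ^ (k - 1)))
    (hg : ∀ x, g x = f x + 2 ^ (k - 2) * iotaZ k (Tr n x) +
      2 ^ (k - 1) * iotaZ k (sig n 1 x))
    (hh : ∀ x, h x = g x + 2 ^ (k - 1) * iotaZ k (Tr n x))
    (hft : ∀ x, ftilde x = ((f x).val : ZMod (2 ^ (k - 1)))) :
    (∀ u : F, ∀ c : ZMod (2 ^ k), c ≠ 0 →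
        ‖negaK n k f c u‖ = Real.sqrt (2 ^ n)) ↔
      ((∀ u : F, ‖gWH n k g 1 u‖ = Real.sqrt (2 ^ n)) ∧
       (∀ u : F, ‖gWH n k h 1 u‖ = Real.sqrt (2 ^ n)) ∧
       (∀ u : F, ∀ c : ZMod (2 ^ (k - 1)), c ≠ 0 →
          ‖gWH n (k - 1) ftilde c u‖ = Real.sqrt (2 ^ n))) := by
  have hh' : ∀ x, h x = f x + 2 ^ (k - 2) * iotaZ k (Tr n x)
      + 2 ^ (k - 1) * iotaZ k (sig n 1 x) + 2 ^ (k - 1) * iotaZ k (Tr n x) := fun x => by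
    rw [hh x, hg x]
  have h2k : 4 ≤ 2 ^ k := by
    calc (4:ℕ) = 2 ^ 2 := rfl
      _ ≤ 2 ^ k := Nat.pow_le_pow_right (by norm_num) hk
  have hone : (1 : ZMod (2 ^ k)).val = 1 := by
    rw [← Nat.cast_one, ZMod.val_natCast, Nat.mod_eq_of_lt (by omega)]
  have hm1 : ((2 ^ k - 1 : ℕ) : ZMod (2 ^ k)).val = 2 ^ k - 1 := by
    rw [ZMod.val_natCast, Nat.mod_eq_of_lt (by omega)]
  have hm4 : (2 ^ k - 1) % 4 = 3 := by
    have h4 : (4:ℕ) ∣ 2 ^ k := by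
      refine ⟨2 ^ (k - 2), ?_⟩
      rw [show k = 2 + (k - 2) by omega, pow_add]; norm_num
    omega
  have hsucc : 2 * 2 ^ (k - 1) = 2 ^ k := by rw [← pow_succ']; congr 1; omega
  constructor
  · intro H
    refine ⟨fun u => ?_, fun u => ?_, fun u c' hc' => ?_⟩
    · rw [← negaK_eq_gWH_g n k hk f g hg 1 (by rw [hone]) u]
      refine H u 1 fun h0 => ?_
      have := congrArg ZMod.val h0
      rw [hone, ZMod.val_zero] at this
      omega
    · have hne : ((2 ^ k - 1 : ℕ) : ZMod (2 ^ k)) ≠ 0 := fun h0 => by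
        have := congrArg ZMod.val h0
        rw [hm1, ZMod.val_zero] at this
        omega
      have h1 := H u _ hne
      rw [negaK_eq_gWH_h n k hk f h hh' _ (by rw [hm1]; exact hm4) u] at h1
      exact gWH_abs_odd n k h u _ 1 (by rw [hm1]; omega) (by rw [hone]) h1
    · set c : ZMod (2 ^ k) := ((2 * c'.val : ℕ) : ZMod (2 ^ k)) with hcdef
      have hc'lt : c'.val < 2 ^ (k - 1) := ZMod.val_lt c'
      have hcval : c.val = 2 * c'.val := by
        rw [hcdef, ZMod.val_natCast, Nat.mod_eq_of_lt (by omega)]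
      have hc0 : c ≠ 0 := fun h0 => by
        have hv := congrArg ZMod.val h0
        rw [hcval, ZMod.val_zero] at hv
        exact hc' ((ZMod.val_eq_zero c').mp (by omega))
      rw [← negaK_even n k (by omega) f ftilde hft c c' hcval u]
      exact H u c hc0
  · rintro ⟨Hg, Hh, Hf⟩ u c hc0
    rcases Nat.even_or_odd c.val with he | ho
    · set c' : ZMod (2 ^ (k - 1)) := ((c.val / 2 : ℕ) : ZMod (2 ^ (k - 1))) with hc'def
      have hlt : c.val < 2 ^ k := ZMod.val_lt c
      have hc'val : c'.val = c.val / 2 := by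
        rw [hc'def, ZMod.val_natCast, Nat.mod_eq_of_lt (by omega)]
      have hcc : c.val = 2 * c'.val := by
        rw [hc'val]
        rcases he with ⟨r, hr⟩
        omega
      rw [negaK_even n k (by omega) f ftilde hft c c' hcc u]
      refine Hf u c' fun h0 => hc0 ?_
      rw [h0, ZMod.val_zero, mul_zero] at hcc
      exact (ZMod.val_eq_zero c).mp hcc
    · have ho2 : c.val % 2 = 1 := Nat.odd_iff.mp ho
      rcases (by omega : c.val % 4 = 1 ∨ c.val % 4 = 3) with h4 | h4
      · rw [negaK_eq_gWH_g n k hk f g hg c h4 u]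
        exact gWH_abs_odd n k g u 1 c (by rw [hone]) ho2 (Hg u)
      · rw [negaK_eq_gWH_h n k hk f h hh' c h4 u]
        exact gWH_abs_odd n k h u 1 c (by rw [hone]) ho2 (Hh u)
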